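/- Let r ≥ 2 and let n_{kj} (1 ≤ j < k ≤ r) be nonnegative integers; put p_k = Σ_{j<k} n_{kj} and q_j = Σ_{k>j} n_{kj}. Then the following are equivalent: (i) there exists m ∈ {0,1} such that Σ_{1≤j<k≤r} ε_j δ_k n_{kj} ≡ 4m (mod 8) for all ε, δ ∈ {1,-1}^r; (ii) every n_{kj} is even, and every p_k (1 ≤ k ≤ r) and every q_j (1 ≤ j ≤ r) is divisible by 4. -/
import Mathlib


/-!
Common definitions for zeta functions associated with homogeneous cones
(following Nakashima, "Functional equations of zeta functions associated
with homogeneous cones"): the functions `c(z) = cos (π z / 2)`,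
`s(z) = sin (π z / 2)`, the recursive ordering of the sign set
`I_r = {1,-1}^r`, the Hadamard matrices `J^(r)`, the gamma-matrix
`A_r(α; Θ)`, the matrices `C_r`, `S_r`, the diagonal matrices `D_j^(r)(α)`,
and the rotation matrices `P_{kj}^(r)(θ) = c(θ)·I + s(θ)·X_{kj}^(r)`.
Matrices indexed by `I_s` are identified with `2^s × 2^s` matrices via the
recursive ordering, which is encoded by `ord s : Fin (2^s) → (Fin s → ℤ)`,
sending a position to the corresponding sign vector.
-/

noncomputable section
open Matrix Complex

namespace HomCone

/-- `c(z) = cos (π z / 2)`. -/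
def cc (z : ℂ) : ℂ := Complex.cos (Real.pi * z / 2)

/-- `s(z) = sin (π z / 2)`. -/
def ss (z : ℂ) : ℂ := Complex.sin (Real.pi * z / 2)

/-- The recursive ordering of `I_r = {1,-1}^r`: `ord r i` is the `i`-th sign
vector of `I_r` (positions starting from `0`).  For `r+1`: the `i`-th element
of `I_{r+1}` is `(1, ε_i)` for `i < 2^r` and `(-1, -ε_{i-2^r})` otherwise,
where `ε_i` is the `i`-th element of `I_r`. -/
def ord : (r : ℕ) → Fin (2 ^ r) → Fin r → ℤ
  | 0, _, j => j.elim0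
  | r + 1, i, j =>
    if h : (i : ℕ) < 2 ^ r then
      (if _ : (j : ℕ) = 0 then 1
       else ord r ⟨(i : ℕ), h⟩ ⟨(j : ℕ) - 1, by have := j.isLt; omega⟩)
    else
      (if _ : (j : ℕ) = 0 then -1
       else - ord r ⟨(i : ℕ) - 2 ^ r, by
              have h1 := i.isLt
              have h2 : 2 ^ (r + 1) = 2 ^ r * 2 := pow_succ 2 r
              omega⟩ ⟨(j : ℕ) - 1, by have := j.isLt; omega⟩)

/-- The `l`-th binary digit (`l = 1, …, m`, with `l = 1` the most significant)
of a position `i ∈ Fin (2^m)`; by convention `0` for `l` outside `1, …, m`. -/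
def bitv (m : ℕ) (i : Fin (2 ^ m)) (l : ℕ) : ℕ :=
  if 1 ≤ l ∧ l ≤ m ∧ (i : ℕ).testBit (m - l) then 1 else 0

/-- The Hadamard matrix `J^(r)`, defined recursively by
`J^(0) = (1)` and `J^(r+1) = J^(1) ⊗ J^(r)`, i.e. `J^(r+1)` is the `2 × 2`
block matrix `(1/√2) [[J^(r), J^(r)], [J^(r), -J^(r)]]`. -/
def Jmat : (r : ℕ) → Matrix (Fin (2 ^ r)) (Fin (2 ^ r)) ℂ
  | 0 => 1
  | r + 1 => fun i i' =>
    ((Real.sqrt 2 : ℂ))⁻¹ *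
      (if 2 ^ r ≤ (i : ℕ) ∧ 2 ^ r ≤ (i' : ℕ) then -1 else 1) *
      Jmat r ⟨(i : ℕ) % 2 ^ r, Nat.mod_lt _ (Nat.two_pow_pos r)⟩
             ⟨(i' : ℕ) % 2 ^ r, Nat.mod_lt _ (Nat.two_pow_pos r)⟩

/-- The matrix `A_r(α; Θ)` of size `2^r`, with `(ε, δ)` entry
`exp((π√-1/2)(Σ_i ε_i δ_i α_i + Σ_{j<k} ε_j δ_k θ_{kj}))`, rows and columns
being indexed by `I_r` via the recursive ordering; here `θ_{kj} = Θ k j`. -/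
def Amat (r : ℕ) (α : Fin r → ℂ) (Θ : Fin r → Fin r → ℝ) :
    Matrix (Fin (2 ^ r)) (Fin (2 ^ r)) ℂ := fun i i' =>
  Complex.exp (Real.pi * Complex.I / 2 *
    ((∑ a : Fin r, (ord r i a : ℂ) * (ord r i' a : ℂ) * α a) +
     ∑ a : Fin r, ∑ b : Fin r,
       if a < b then (ord r i a : ℂ) * (ord r i' b : ℂ) * (Θ b a : ℂ) else 0))

/-- The element of `I_r^0 = {ε ∈ {1,-1}^r : ε_1 = 1}` at position
`i ∈ Fin (2^(r-1))`, via the identification of `I_r^0` with `I_{r-1}`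
dropping the first coordinate (with the induced ordering). -/
def sgn0 (r : ℕ) (i : Fin (2 ^ (r - 1))) (a : Fin r) : ℤ :=
  if _ : (a : ℕ) = 0 then 1
  else ord (r - 1) i ⟨(a : ℕ) - 1, by have := a.isLt; omega⟩

/-- The matrix `C_r(α; Θ)` of size `2^(r-1)`, with `(ε, δ)` entry
`c(Σ_i ε_i δ_i α_i + Σ_{j<k} ε_j δ_k θ_{kj})` for `ε, δ ∈ I_r^0`. -/
def Cmat (r : ℕ) (α : Fin r → ℂ) (Θ : Fin r → Fin r → ℝ) :
    Matrix (Fin (2 ^ (r - 1))) (Fin (2 ^ (r - 1))) ℂ := fun i i' =>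
  cc ((∑ a : Fin r, (sgn0 r i a : ℂ) * (sgn0 r i' a : ℂ) * α a) +
     ∑ a : Fin r, ∑ b : Fin r,
       if a < b then (sgn0 r i a : ℂ) * (sgn0 r i' b : ℂ) * (Θ b a : ℂ) else 0)

/-- The matrix `S_r(α; Θ)` of size `2^(r-1)`, with `(ε, δ)` entry
`s(Σ_i ε_i δ_i α_i + Σ_{j<k} ε_j δ_k θ_{kj})` for `ε, δ ∈ I_r^0`. -/
def Smat (r : ℕ) (α : Fin r → ℂ) (Θ : Fin r → Fin r → ℝ) :
    Matrix (Fin (2 ^ (r - 1))) (Fin (2 ^ (r - 1))) ℂ := fun i i' =>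
  ss ((∑ a : Fin r, (sgn0 r i a : ℂ) * (sgn0 r i' a : ℂ) * α a) +
     ∑ a : Fin r, ∑ b : Fin r,
       if a < b then (sgn0 r i a : ℂ) * (sgn0 r i' b : ℂ) * (Θ b a : ℂ) else 0)

/-- The `i`-th diagonal entry of the diagonal matrix `D_j^(r)(α)` of size
`2^(r-1)`, defined recursively:
`D_1^(r)(α) = diag(c(α)·I_{2^(r-2)}, s(α)·I_{2^(r-2)})` (for `r = 2` this is
`diag(c(α), s(α))`), `D_2^(r)(α) = diag(D_1^(r-1)(α), D_1^(r-1)(α+1))`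
(for `r = 2` this gives `D_2^(2)(α) = diag(c(α), -s(α))`), and
`D_k^(r)(α) = diag(D_{k-1}^(r-1)(α), D_{k-1}^(r-1)(α))` for `3 ≤ k ≤ r`. -/
def dEnt : (r : ℕ) → (j : ℕ) → ℂ → Fin (2 ^ (r - 1)) → ℂ
  | r, 0, _, _ => 0
  | r, 1, α, i => if (i : ℕ) < 2 ^ (r - 2) then cc α else ss α
  | r, 2, α, i =>
    if h : (i : ℕ) < 2 ^ (r - 2) then
      dEnt (r - 1) 1 α ⟨(i : ℕ), by
        have h3 : r - 1 - 1 = r - 2 := by omega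
        rw [h3]; exact h⟩
    else
      dEnt (r - 1) 1 (α + 1) ⟨(i : ℕ) - 2 ^ (r - 2), by
        have h1 := i.isLt
        have h2 : 2 ^ (r - 1) ≤ 2 * 2 ^ (r - 2) := by
          calc 2 ^ (r - 1) ≤ 2 ^ (r - 2 + 1) :=
                Nat.pow_le_pow_right (by norm_num) (by omega)
            _ = 2 * 2 ^ (r - 2) := by rw [pow_succ]; exact Nat.mul_comm _ _
        have h3 : r - 1 - 1 = r - 2 := by omega
        rw [h3]; omega⟩
  | r, j + 3, α, i =>
    if h : (i : ℕ) < 2 ^ (r - 2) then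
      dEnt (r - 1) (j + 2) α ⟨(i : ℕ), by
        have h3 : r - 1 - 1 = r - 2 := by omega
        rw [h3]; exact h⟩
    else
      dEnt (r - 1) (j + 2) α ⟨(i : ℕ) - 2 ^ (r - 2), by
        have h1 := i.isLt
        have h2 : 2 ^ (r - 1) ≤ 2 * 2 ^ (r - 2) := by
          calc 2 ^ (r - 1) ≤ 2 ^ (r - 2 + 1) :=
                Nat.pow_le_pow_right (by norm_num) (by omega)
            _ = 2 * 2 ^ (r - 2) := by rw [pow_succ]; exact Nat.mul_comm _ _
        have h3 : r - 1 - 1 = r - 2 := by omega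
        rw [h3]; omega⟩

/-- The diagonal matrix `D_j^(r)(α)` of size `2^(r-1)` (`j = 1, …, r`). -/
def Dmat (r j : ℕ) (α : ℂ) : Matrix (Fin (2 ^ (r - 1))) (Fin (2 ^ (r - 1))) ℂ :=
  Matrix.diagonal (dEnt r j α)

/-- The matrix `X_{kj}^(r) = I_{2^(j-1)} ⊗ R₂ ⊗ A₂^{⊗(k-j-1)} ⊗ I_{2^(r-k)}`
of size `2^(r-1)` (`1 ≤ j < k ≤ r`), where `R₂ = [[0,-1],[1,0]]` and
`A₂ = [[0,1],[1,0]]`, written out entrywise via binary digits (the factors of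
the Kronecker product act on the binary digits, the first factor acting on
the most significant digits): the `(i, i')` entry is nonzero iff the digits
of `i` and `i'` agree at the positions `l < j` and `l ≥ k` (the identity
factors) and disagree at the positions `j ≤ l ≤ k-1` (the factors `R₂` and
`A₂`), and the nonzero value is `-1` when the `j`-th digit of `i` is `0`,
and `1` when it is `1` (the factor `R₂`). -/
def Xmat (r j k : ℕ) : Matrix (Fin (2 ^ (r - 1))) (Fin (2 ^ (r - 1))) ℂ :=
  fun i i' =>
    if (∀ l ∈ Finset.range r, (l < j ∨ k ≤ l) → bitv (r - 1) i l = bitv (r - 1) i' l)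
        ∧ (∀ l ∈ Finset.range r, j ≤ l → l < k → bitv (r - 1) i l ≠ bitv (r - 1) i' l)
    then (if bitv (r - 1) i j = 0 then -1 else 1) else 0

/-- The orthogonal matrix `P_{kj}^(r)(θ) = c(θ)·I_{2^(r-1)} + s(θ)·X_{kj}^(r)`. -/
def Pmat (r j k : ℕ) (θ : ℝ) : Matrix (Fin (2 ^ (r - 1))) (Fin (2 ^ (r - 1))) ℂ :=
  cc θ • (1 : Matrix (Fin (2 ^ (r - 1))) (Fin (2 ^ (r - 1))) ℂ) + ss θ • Xmat r j k

lemma two_pow_pred (m : ℕ) (h : 1 ≤ m) : 2 ^ (m - 1) + 2 ^ (m - 1) = 2 ^ m := by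
  have h1 : m - 1 + 1 = m := by omega
  have h2 : 2 ^ (m - 1 + 1) = 2 ^ (m - 1) * 2 := pow_succ 2 (m - 1)
  rw [h1] at h2
  omega

/-- The identification `Fin (2^(m-1)) ⊕ Fin (2^(m-1)) ≃ Fin (2^m)` used to
regard a `2 × 2` block matrix with blocks of size `2^(m-1)` as a matrix of
size `2^m`. -/
def sumEquiv (m : ℕ) (h : 1 ≤ m) : Fin (2 ^ (m - 1)) ⊕ Fin (2 ^ (m - 1)) ≃ Fin (2 ^ m) :=
  finSumFinEquiv.trans (finCongr (two_pow_pred m h))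

/-- The matrix `K̃ = (1/√2) [[I, I], [I, -I]]` of size `2^m`, with
`I = I_{2^(m-1)}`. -/
def Ktilde (m : ℕ) (h : 1 ≤ m) : Matrix (Fin (2 ^ m)) (Fin (2 ^ m)) ℂ :=
  Matrix.reindex (sumEquiv m h) (sumEquiv m h)
    (((Real.sqrt 2 : ℂ))⁻¹ • Matrix.fromBlocks 1 1 1 (-1))

end HomCone

namespace HomCone

/-- for `r ≥ 2` and nonnegative integers `n_{kj}` (`1 ≤ j < k ≤ r`),
with `p_k = Σ_{j<k} n_{kj}` and `q_j = Σ_{k>j} n_{kj}`, the following are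
equivalent: (i) there is `m ∈ {0,1}` with
`Σ_{j<k} ε_j δ_k n_{kj} ≡ 4m (mod 8)` for all `ε, δ ∈ {1,-1}^r`;
(ii) every `n_{kj}` is even and every `p_k` and every `q_j` is divisible by 4. -/
theorem statement18 (r : ℕ) (hr : 2 ≤ r) (n : Fin r → Fin r → ℕ) :
    (∃ m : ℕ, m ≤ 1 ∧ ∀ ε δ : Fin r → ℤ,
        (∀ i, ε i = 1 ∨ ε i = -1) → (∀ i, δ i = 1 ∨ δ i = -1) →
        (∑ j, ∑ k, if j < k then ε j * δ k * (n k j : ℤ) else 0) ≡ 4 * (m : ℤ) [ZMOD 8]) ↔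
      ((∀ j k : Fin r, j < k → 2 ∣ n k j) ∧
        (∀ k : Fin r, 4 ∣ ∑ j ∈ Finset.univ.filter (· < k), n k j) ∧
        (∀ j : Fin r, 4 ∣ ∑ k ∈ Finset.univ.filter (j < ·), n k j)) := by
  classical
  -- cast lemmas relating the ℕ filter sums with ℤ "if" sums
  have castP : ∀ k0 : Fin r,
      ((∑ j ∈ Finset.univ.filter (· < k0), n k0 j : ℕ) : ℤ)
        = ∑ j, if j < k0 then (n k0 j : ℤ) else 0 := by
    intro k0
    rw [Finset.sum_filter, Nat.cast_sum]
    exact Finset.sum_congr rfl fun j _ => by split_ifs <;> simp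
  have castQ : ∀ j0 : Fin r,
      ((∑ k ∈ Finset.univ.filter (j0 < ·), n k j0 : ℕ) : ℤ)
        = ∑ k, if j0 < k then (n k j0 : ℤ) else 0 := by
    intro j0
    rw [Finset.sum_filter, Nat.cast_sum]
    exact Finset.sum_congr rfl fun k _ => by split_ifs <;> simp
  constructor
  · rintro ⟨m, hm, h⟩
    have hone : ∀ i : Fin r, (fun _ : Fin r => (1:ℤ)) i = 1 ∨ (fun _ : Fin r => (1:ℤ)) i = -1 :=
      fun _ => Or.inl rfl
    have h1 := h (fun _ => 1) (fun _ => 1) hone hone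
    -- For any sign vectors ε, δ: 8 divides Σ_{j<k} (1 - ε_j δ_k) n_{kj}
    have hdiff : ∀ ε δ : Fin r → ℤ, (∀ i, ε i = 1 ∨ ε i = -1) → (∀ i, δ i = 1 ∨ δ i = -1) →
        (8:ℤ) ∣ ∑ j, ∑ k, if j < k then (1 - ε j * δ k) * (n k j : ℤ) else 0 := by
      intro ε δ hε hδ
      have h2 := h ε δ hε hδ
      have hdvd := (h2.trans h1.symm).dvd
      have heq : (∑ j, ∑ k, if j < k then (fun _ : Fin r => (1:ℤ)) j * (fun _ : Fin r => (1:ℤ)) k * (n k j : ℤ) else 0)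
            - (∑ j, ∑ k, if j < k then ε j * δ k * (n k j : ℤ) else 0)
          = ∑ j, ∑ k, if j < k then (1 - ε j * δ k) * (n k j : ℤ) else 0 := by
        simp only [← Finset.sum_sub_distrib]
        refine Finset.sum_congr rfl fun j _ => Finset.sum_congr rfl fun k _ => ?_
        split_ifs <;> ring
      rw [heq] at hdvd
      exact hdvd
    -- divisibility of the column sums p_k by 4 (ℤ version)
    have hPint : ∀ k0 : Fin r, (4:ℤ) ∣ ∑ j, if j < k0 then (n k0 j : ℤ) else 0 := by
      intro k0
      set δ : Fin r → ℤ := fun k => if k = k0 then -1 else 1 with hδdef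
      have hδ : ∀ i, δ i = 1 ∨ δ i = -1 := by
        intro i; by_cases hi : i = k0 <;> simp [hδdef, hi]
      have hd := hdiff (fun _ => 1) δ hone hδ
      have heq : (∑ j, ∑ k, if j < k then (1 - (fun _ : Fin r => (1:ℤ)) j * δ k) * (n k j : ℤ) else 0)
          = 2 * ∑ j, if j < k0 then (n k0 j : ℤ) else 0 := by
        rw [Finset.mul_sum]
        refine Finset.sum_congr rfl fun j _ => ?_
        have hterm : ∀ k : Fin r,
            (if j < k then (1 - (fun _ : Fin r => (1:ℤ)) j * δ k) * (n k j : ℤ) else 0)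
              = if k = k0 then (if j < k0 then 2 * (n k0 j : ℤ) else 0) else 0 := by
          intro k
          by_cases hk : k = k0
          · subst hk
            simp only [hδdef, if_pos rfl]
            split_ifs <;> ring
          · have : δ k = 1 := if_neg hk
            simp [hδdef, hk, this]
        rw [Finset.sum_congr rfl fun k _ => hterm k, Fintype.sum_ite_eq']
        split_ifs <;> ring
      rw [heq] at hd
      obtain ⟨c, hc⟩ := hd
      exact ⟨c, by omega⟩
    -- divisibility of the row sums q_j by 4 (ℤ version)
    have hQint : ∀ j0 : Fin r, (4:ℤ) ∣ ∑ k, if j0 < k then (n k j0 : ℤ) else 0 := by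
      intro j0
      set ε : Fin r → ℤ := fun j => if j = j0 then -1 else 1 with hεdef
      have hε : ∀ i, ε i = 1 ∨ ε i = -1 := by
        intro i; by_cases hi : i = j0 <;> simp [hεdef, hi]
      have hd := hdiff ε (fun _ => 1) hε hone
      have heq : (∑ j, ∑ k, if j < k then (1 - ε j * (fun _ : Fin r => (1:ℤ)) k) * (n k j : ℤ) else 0)
          = 2 * ∑ k, if j0 < k then (n k j0 : ℤ) else 0 := by
        have hterm : ∀ j : Fin r,
            (∑ k, if j < k then (1 - ε j * (fun _ : Fin r => (1:ℤ)) k) * (n k j : ℤ) else 0)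
              = if j = j0 then (2 * ∑ k, if j0 < k then (n k j0 : ℤ) else 0) else 0 := by
          intro j
          by_cases hj : j = j0
          · have e : ε j0 = -1 := if_pos rfl
            rw [hj, if_pos (rfl : (j0 : Fin r) = j0), Finset.mul_sum]
            refine Finset.sum_congr rfl fun k _ => ?_
            rw [e]
            split_ifs <;> ring
          · have : ε j = 1 := if_neg hj
            rw [if_neg hj, this]
            simp
        rw [Finset.sum_congr rfl fun j _ => hterm j, Fintype.sum_ite_eq']
      rw [heq] at hd
      obtain ⟨c, hc⟩ := hd
      exact ⟨c, by omega⟩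
    refine ⟨?_, ?_, ?_⟩
    · -- every n_{kj} is even
      intro j0 k0 hjk
      set ε : Fin r → ℤ := fun j => if j = j0 then -1 else 1 with hεdef
      set δ : Fin r → ℤ := fun k => if k = k0 then -1 else 1 with hδdef
      have hε : ∀ i, ε i = 1 ∨ ε i = -1 := by
        intro i; by_cases hi : i = j0 <;> simp [hεdef, hi]
      have hδ : ∀ i, δ i = 1 ∨ δ i = -1 := by
        intro i; by_cases hi : i = k0 <;> simp [hδdef, hi]
      have hd := hdiff ε δ hε hδ
      set Q0 : ℤ := ∑ k, if j0 < k then (n k j0 : ℤ) else 0 with hQ0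
      set P0 : ℤ := ∑ j, if j < k0 then (n k0 j : ℤ) else 0 with hP0
      have heq : (∑ j, ∑ k, if j < k then (1 - ε j * δ k) * (n k j : ℤ) else 0)
          = 2 * Q0 + 2 * P0 - 4 * (n k0 j0 : ℤ) := by
        have hterm : ∀ j k : Fin r,
            (if j < k then (1 - ε j * δ k) * (n k j : ℤ) else 0)
              = (if j = j0 then (if j0 < k then 2 * (n k j0 : ℤ) else 0) else 0)
                + (if k = k0 then (if j < k0 then 2 * (n k0 j : ℤ) else 0) else 0)
                - (if j = j0 then (if k = k0 then (if j0 < k0 then 4 * (n k0 j0 : ℤ) else 0) else 0) else 0) := by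
          intro j k
          by_cases hj : j = j0 <;> by_cases hk : k = k0
          · have e1 : ε j0 = -1 := if_pos rfl
            have e2 : δ k0 = -1 := if_pos rfl
            rw [hj, hk]
            simp only [e1, e2, if_pos (rfl : (j0 : Fin r) = j0),
              if_pos (rfl : (k0 : Fin r) = k0)]
            split_ifs <;> ring
          · have e1 : ε j0 = -1 := if_pos rfl
            have e2 : δ k = 1 := if_neg hk
            rw [hj]
            simp only [e1, e2, if_pos (rfl : (j0 : Fin r) = j0), if_neg hk]
            split_ifs <;> ring
          · have e1 : ε j = 1 := if_neg hj
            have e2 : δ k0 = -1 := if_pos rfl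
            rw [hk]
            simp only [e1, e2, if_neg hj, if_pos (rfl : (k0 : Fin r) = k0)]
            split_ifs <;> ring
          · have e1 : ε j = 1 := if_neg hj
            have e2 : δ k = 1 := if_neg hk
            simp only [e1, e2, if_neg hj, if_neg hk]
            split_ifs <;> ring
        calc (∑ j, ∑ k, if j < k then (1 - ε j * δ k) * (n k j : ℤ) else 0)
            = ∑ j, ∑ k, ((if j = j0 then (if j0 < k then 2 * (n k j0 : ℤ) else 0) else 0)
                + (if k = k0 then (if j < k0 then 2 * (n k0 j : ℤ) else 0) else 0)
                - (if j = j0 then (if k = k0 then (if j0 < k0 then 4 * (n k0 j0 : ℤ) else 0) else 0) else 0)) :=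
              Finset.sum_congr rfl fun j _ => Finset.sum_congr rfl fun k _ => hterm j k
          _ = (∑ j, ∑ k, (if j = j0 then (if j0 < k then 2 * (n k j0 : ℤ) else 0) else 0))
                + (∑ j, ∑ k, (if k = k0 then (if j < k0 then 2 * (n k0 j : ℤ) else 0) else 0))
                - (∑ j, ∑ k, (if j = j0 then (if k = k0 then (if j0 < k0 then 4 * (n k0 j0 : ℤ) else 0) else 0) else 0)) := by
              simp only [Finset.sum_add_distrib, Finset.sum_sub_distrib]
          _ = 2 * Q0 + 2 * P0 - 4 * (n k0 j0 : ℤ) := by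
              have pull1 : ∀ j : Fin r,
                  (∑ k, if j = j0 then (if j0 < k then 2 * (n k j0 : ℤ) else 0) else 0)
                    = if j = j0 then (∑ k, if j0 < k then 2 * (n k j0 : ℤ) else 0) else 0 :=
                fun j => by split_ifs <;> simp
              have pull2 : ∀ k : Fin r,
                  (∑ j, if k = k0 then (if j < k0 then 2 * (n k0 j : ℤ) else 0) else 0)
                    = if k = k0 then (∑ j, if j < k0 then 2 * (n k0 j : ℤ) else 0) else 0 :=
                fun k => by split_ifs <;> simp
              have pull3 : ∀ j : Fin r,
                  (∑ k, if j = j0 then (if k = k0 then (if j0 < k0 then 4 * (n k0 j0 : ℤ) else 0) else 0) else 0)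
                    = if j = j0 then (if j0 < k0 then 4 * (n k0 j0 : ℤ) else 0) else 0 := by
                intro j
                split_ifs <;> simp
              congr 1
              · congr 1
                · rw [Finset.sum_congr rfl fun j _ => pull1 j,
                    Fintype.sum_ite_eq' j0 (fun _ => ∑ k, if j0 < k then 2 * (n k j0 : ℤ) else 0),
                    hQ0, Finset.mul_sum]
                  refine Finset.sum_congr rfl fun k _ => ?_
                  split_ifs <;> ring
                · rw [Finset.sum_comm, Finset.sum_congr rfl fun k _ => pull2 k,
                    Fintype.sum_ite_eq' k0 (fun _ => ∑ j, if j < k0 then 2 * (n k0 j : ℤ) else 0),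
                    hP0, Finset.mul_sum]
                  refine Finset.sum_congr rfl fun j _ => ?_
                  split_ifs <;> ring
              · rw [Finset.sum_congr rfl fun j _ => pull3 j,
                  Fintype.sum_ite_eq' j0 (fun _ => if j0 < k0 then 4 * (n k0 j0 : ℤ) else 0),
                  if_pos hjk]
      rw [heq] at hd
      have h4Q := hQint j0
      have h4P := hPint k0
      rw [← hQ0] at h4Q
      rw [← hP0] at h4P
      have : (2:ℤ) ∣ (n k0 j0 : ℤ) := by
        obtain ⟨a, ha⟩ := hd
        obtain ⟨b, hb⟩ := h4Q
        obtain ⟨c, hc⟩ := h4P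
        rw [hb, hc] at ha
        exact ⟨b + c - a, by omega⟩
      exact_mod_cast this
    · -- p_k divisible by 4
      intro k0
      have := hPint k0
      rw [← castP k0] at this
      exact_mod_cast this
    · -- q_j divisible by 4
      intro j0
      have := hQint j0
      rw [← castQ j0] at this
      exact_mod_cast this
  · rintro ⟨heven, hp, hq⟩
    -- ℤ versions of the divisibility hypotheses
    have hPint : ∀ k0 : Fin r, (4:ℤ) ∣ ∑ j, if j < k0 then (n k0 j : ℤ) else 0 := by
      intro k0; rw [← castP k0]; exact_mod_cast hp k0
    have hQint : ∀ j0 : Fin r, (4:ℤ) ∣ ∑ k, if j0 < k then (n k j0 : ℤ) else 0 := by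
      intro j0; rw [← castQ j0]; exact_mod_cast hq j0
    -- the full sum N and its decomposition N = 4t
    set N : ℤ := ∑ j, ∑ k, if j < k then (n k j : ℤ) else 0 with hN
    have h4N : (4:ℤ) ∣ N := by
      rw [hN, Finset.sum_comm]
      exact Finset.dvd_sum fun k _ => hPint k
    obtain ⟨t, ht⟩ := h4N
    refine ⟨(t % 2).toNat, by omega, ?_⟩
    intro ε δ hε hδ
    have hε2 : ∀ i, (2:ℤ) ∣ (1 - ε i) := by
      intro i; rcases hε i with h' | h' <;> rw [h'] <;> decide
    have hδ2 : ∀ i, (2:ℤ) ∣ (1 - δ i) := by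
      intro i; rcases hδ i with h' | h' <;> rw [h'] <;> decide
    -- F ε δ ≡ N [ZMOD 8]
    have hstep : (∑ j, ∑ k, if j < k then ε j * δ k * (n k j : ℤ) else 0) ≡ N [ZMOD 8] := by
      rw [Int.modEq_iff_dvd]
      have heq : N - (∑ j, ∑ k, if j < k then ε j * δ k * (n k j : ℤ) else 0)
          = (∑ j, ∑ k, if j < k then (1 - ε j) * (δ k - 1) * (n k j : ℤ) else 0)
            + (∑ j, ∑ k, if j < k then (1 - ε j) * (n k j : ℤ) else 0)
            + (∑ j, ∑ k, if j < k then (1 - δ k) * (n k j : ℤ) else 0) := by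
        rw [hN]
        simp only [← Finset.sum_add_distrib, ← Finset.sum_sub_distrib]
        refine Finset.sum_congr rfl fun j _ => Finset.sum_congr rfl fun k _ => ?_
        split_ifs <;> ring
      rw [heq]
      refine dvd_add (dvd_add ?_ ?_) ?_
      · refine Finset.dvd_sum fun j _ => Finset.dvd_sum fun k _ => ?_
        split_ifs with hjk
        · obtain ⟨a, ha⟩ := hε2 j
          obtain ⟨b, hb⟩ := hδ2 k
          obtain ⟨c, hc⟩ : (2:ℤ) ∣ (n k j : ℤ) := by exact_mod_cast heven j k hjk
          refine ⟨-(a * b * c), ?_⟩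
          have h2 : δ k - 1 = -(2 * b) := by omega
          rw [ha, h2, hc]; ring
        · exact dvd_zero _
      · refine Finset.dvd_sum fun j _ => ?_
        have heq2 : (∑ k, if j < k then (1 - ε j) * (n k j : ℤ) else 0)
            = (1 - ε j) * ∑ k, if j < k then (n k j : ℤ) else 0 := by
          rw [Finset.mul_sum]
          exact Finset.sum_congr rfl fun k _ => by split_ifs <;> ring
        rw [heq2]
        exact (show (8:ℤ) = 2 * 4 by norm_num) ▸ mul_dvd_mul (hε2 j) (hQint j)
      · rw [Finset.sum_comm]
        refine Finset.dvd_sum fun k _ => ?_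
        have heq2 : (∑ j, if j < k then (1 - δ k) * (n k j : ℤ) else 0)
            = (1 - δ k) * ∑ j, if j < k then (n k j : ℤ) else 0 := by
          rw [Finset.mul_sum]
          exact Finset.sum_congr rfl fun j _ => by split_ifs <;> ring
        rw [heq2]
        exact (show (8:ℤ) = 2 * 4 by norm_num) ▸ mul_dvd_mul (hδ2 k) (hPint k)
    refine hstep.trans ?_
    show N % 8 = (4 * ((t % 2).toNat : ℤ)) % 8
    omega

end HomCone
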